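/- Let f : [0,1] → ℝ be l times differentiable with |f^{(l)}(x) − f^{(l)}(x')| ≤ L|x − x'|^{β−l} for all x,x' ∈ [0,1], where l < β ≤ l+1. Let W : {−r,…,r} → ℝ satisfy |W(i)| ≤ W_max and (2r+1)⁻¹ Σ_{i=−r}^r i^k W(i) = 𝟙(k=0) for k = 0,…,l. Then for any t with r ≤ t ≤ T−r (T ≥ 2r), |(2r+1)⁻¹ Σ_{i=−r}^r W(i)·[f((t+i)/T) − f(t/T)]| ≤ (L·W_max/l!)·(r/T)^β. -/

import Mathlib

private lemma iterDW_eq {l : ℕ} {f : ℝ → ℝ} (hf : ContDiff ℝ (l : ℕ∞) f)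
    {s : Set ℝ} (hs : UniqueDiffOn ℝ s) {n : ℕ} (hn : n ≤ l) {x : ℝ} (hx : x ∈ s) :
    iteratedDerivWithin n f s x = iteratedDeriv n f x := by
  have H : HasFTaylorSeriesUpTo (l : ℕ∞) f (ftaylorSeries ℝ f) := by
    rw [← hasFTaylorSeriesUpToOn_univ_iff, ← ftaylorSeriesWithin_univ]
    exact hf.contDiffOn.ftaylorSeriesWithin uniqueDiffOn_univ
  rw [iteratedDerivWithin_eq_iteratedFDerivWithin, iteratedDeriv_eq_iteratedFDeriv,
    ← (H.hasFTaylorSeriesUpToOn s).eq_iteratedFDerivWithin_of_uniqueDiffOn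
      (by exact_mod_cast hn) hs hx,
    ← H.eq_iteratedFDeriv (by exact_mod_cast hn) x]

private lemma taylor_step {m : ℕ} {f : ℝ → ℝ} (hf : ContDiff ℝ ((m + 1 : ℕ) : ℕ∞) f)
    {x y : ℝ} (hxy : x < y) :
    ∃ ξ ∈ Set.Ioo x y,
      f y - ∑ k ∈ Finset.range (m + 2),
          ((k.factorial : ℝ))⁻¹ * (y - x) ^ k * iteratedDeriv k f x
        = (iteratedDeriv (m + 1) f ξ - iteratedDeriv (m + 1) f x) * (y - x) ^ (m + 1)
            / ((m + 1).factorial : ℝ) := by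
  have hud : UniqueDiffOn ℝ (Set.Icc x y) := uniqueDiffOn_Icc hxy
  have hcd : ContDiffOn ℝ m f (Set.Icc x y) :=
    (hf.of_le (by exact_mod_cast Nat.le_succ m)).contDiffOn
  have hdiff : DifferentiableOn ℝ (iteratedDerivWithin m f (Set.Icc x y)) (Set.Ioo x y) := by
    intro u hu
    have h1 : DifferentiableAt ℝ (iteratedDeriv m f) u :=
      (hf.differentiable_iteratedDeriv m (by exact_mod_cast Nat.lt_succ_self m)).differentiableAt
    exact h1.differentiableWithinAt.congr
      (fun v hv => iterDW_eq hf hud (Nat.le_succ m) (Set.Ioo_subset_Icc_self hv))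
      (iterDW_eq hf hud (Nat.le_succ m) (Set.Ioo_subset_Icc_self hu))
  obtain ⟨ξ, hξ, hT⟩ := taylor_mean_remainder_lagrange hxy.ne
    (by rwa [Set.uIcc_of_le hxy.le]) (by rwa [Set.uIcc_of_le hxy.le, Set.uIoo_of_le hxy.le])
  rw [Set.uIoo_of_le hxy.le] at hξ
  rw [Set.uIcc_of_le hxy.le] at hT
  refine ⟨ξ, hξ, ?_⟩
  rw [taylor_within_apply] at hT
  have e1 : ∀ k ∈ Finset.range (m + 1),
      (((k.factorial : ℝ))⁻¹ * (y - x) ^ k) • iteratedDerivWithin k f (Set.Icc x y) x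
        = ((k.factorial : ℝ))⁻¹ * (y - x) ^ k * iteratedDeriv k f x := by
    intro k hk
    rw [iterDW_eq hf hud (by have := Finset.mem_range.mp hk; omega : k ≤ m + 1) (Set.left_mem_Icc.2 hxy.le), smul_eq_mul]
  rw [Finset.sum_congr rfl e1,
    iterDW_eq hf hud le_rfl (Set.Ioo_subset_Icc_self hξ)] at hT
  rw [Finset.sum_range_succ]
  linear_combination hT

private lemma taylor_holder (l : ℕ) (β L : ℝ) (hβ1 : (l : ℝ) < β) (hL : 0 < L)
    (f : ℝ → ℝ) (hf : ContDiff ℝ (l : ℕ∞) f)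
    (hHolder : ∀ x ∈ Set.Icc (0 : ℝ) 1, ∀ x' ∈ Set.Icc (0 : ℝ) 1,
      |iteratedDeriv l f x - iteratedDeriv l f x'| ≤ L * |x - x'| ^ (β - l))
    {x y : ℝ} (hx : x ∈ Set.Icc (0 : ℝ) 1) (hy : y ∈ Set.Icc (0 : ℝ) 1) :
    |f y - ∑ k ∈ Finset.range (l + 1),
        ((k.factorial : ℝ))⁻¹ * (y - x) ^ k * iteratedDeriv k f x|
      ≤ L * |y - x| ^ β / (l.factorial : ℝ) := by
  have hβ0 : (0 : ℝ) < β := lt_of_le_of_lt (Nat.cast_nonneg l) hβ1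
  rcases eq_or_ne y x with rfl | hne
  · have hsum : ∑ k ∈ Finset.range (l + 1),
        ((k.factorial : ℝ))⁻¹ * (y - y) ^ k * iteratedDeriv k f y = f y := by
      rw [Finset.sum_eq_single_of_mem 0 (Finset.mem_range.2 (Nat.succ_pos l))]
      · simp
      · intro k _ hk
        simp [zero_pow hk]
    rw [hsum, sub_self, abs_zero]
    positivity
  -- key: mean-value form of the remainder
  have key : ∃ ξ, ξ ∈ Set.Icc (0 : ℝ) 1 ∧ |ξ - x| ≤ |y - x| ∧
      f y - ∑ k ∈ Finset.range (l + 1),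
          ((k.factorial : ℝ))⁻¹ * (y - x) ^ k * iteratedDeriv k f x
        = (iteratedDeriv l f ξ - iteratedDeriv l f x) * (y - x) ^ l / (l.factorial : ℝ) := by
    cases l with
    | zero =>
      refine ⟨y, hy, le_refl _, ?_⟩
      simp [iteratedDeriv_zero]
    | succ m =>
      rcases hne.lt_or_gt with hlt | hlt
      · -- y < x : use the reflected function
        set g : ℝ → ℝ := fun u => f (-u) with hg
        have hgc : ContDiff ℝ ((m + 1 : ℕ) : ℕ∞) g := hf.comp contDiff_neg
        obtain ⟨ξ', hξ', hT⟩ := taylor_step hgc (neg_lt_neg hlt)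
        refine ⟨-ξ', ?_, ?_, ?_⟩
        · obtain ⟨h1, h2⟩ := hξ'
          constructor
          · linarith [hy.1]
          · linarith [hx.2]
        · obtain ⟨h1, h2⟩ := hξ'
          rw [abs_sub_comm _ x, abs_sub_comm y x, abs_of_pos (by linarith),
            abs_of_pos (by linarith)]
          linarith
        · have hsum : ∀ k ∈ Finset.range (m + 2),
              ((k.factorial : ℝ))⁻¹ * (-y - -x) ^ k * iteratedDeriv k g (-x)
                = ((k.factorial : ℝ))⁻¹ * (y - x) ^ k * iteratedDeriv k f x := by
            intro k _
            rw [iteratedDeriv_comp_neg, smul_eq_mul, neg_neg]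
            have : (-y - -x : ℝ) ^ k * (-1 : ℝ) ^ k = (y - x) ^ k := by
              rw [← mul_pow]; congr 1; ring
            linear_combination ((k.factorial : ℝ))⁻¹ * iteratedDeriv k f x * this
          have hgy : g (-y) = f y := by simp [hg]
          rw [Finset.sum_congr rfl hsum, hgy] at hT
          rw [hT, iteratedDeriv_comp_neg, iteratedDeriv_comp_neg, neg_neg, smul_eq_mul, smul_eq_mul]
          have h2 : (-y - -x : ℝ) ^ (m + 1) * (-1 : ℝ) ^ (m + 1) = (y - x) ^ (m + 1) := by
            rw [← mul_pow]; congr 1; ring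
          linear_combination ((iteratedDeriv (m + 1) f (-ξ') - iteratedDeriv (m + 1) f x)
            / ((m + 1).factorial : ℝ)) * h2
      · obtain ⟨ξ, hξ, hT⟩ := taylor_step hf hlt
        refine ⟨ξ, ?_, ?_, hT⟩
        · exact ⟨by linarith [hx.1, hξ.1], by linarith [hy.2, hξ.2]⟩
        · rw [abs_of_pos (by linarith [hξ.1]), abs_of_pos (by linarith [hlt])]
          linarith [hξ.2]
  obtain ⟨ξ, hξI, hξle, hEq⟩ := key
  rw [hEq]
  have hfac : (0 : ℝ) < (l.factorial : ℝ) := by exact_mod_cast l.factorial_pos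
  rw [abs_div, abs_mul, abs_pow, abs_of_pos hfac]
  have habs : (0 : ℝ) < |y - x| := abs_pos.2 (sub_ne_zero.2 hne)
  have hrw : |y - x| ^ (β - l) * |y - x| ^ l = |y - x| ^ β := by
    rw [← Real.rpow_natCast |y - x| l, ← Real.rpow_add habs]
    norm_num
  have hb1 : |iteratedDeriv l f ξ - iteratedDeriv l f x| ≤ L * |y - x| ^ (β - l) := by
    refine le_trans (hHolder ξ hξI x hx) (mul_le_mul_of_nonneg_left ?_ hL.le)
    exact Real.rpow_le_rpow (abs_nonneg _) hξle (by linarith)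
  calc |iteratedDeriv l f ξ - iteratedDeriv l f x| * |y - x| ^ l / (l.factorial : ℝ)
      ≤ L * |y - x| ^ (β - l) * |y - x| ^ l / (l.factorial : ℝ) := by gcongr
    _ = L * |y - x| ^ β / (l.factorial : ℝ) := by rw [mul_assoc, hrw]

theorem kernel_bias_bound (l : ℕ) (β L Wmax : ℝ)
    (hβ1 : (l : ℝ) < β) (hβ2 : β ≤ (l : ℝ) + 1) (hL : 0 < L)
    (f : ℝ → ℝ) (hf : ContDiff ℝ (l : ℕ∞) f)
    (hHolder : ∀ x ∈ Set.Icc (0 : ℝ) 1, ∀ x' ∈ Set.Icc (0 : ℝ) 1,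
      |iteratedDeriv l f x - iteratedDeriv l f x'| ≤ L * |x - x'| ^ (β - l))
    (r t T : ℕ) (hT : 0 < T) (hrt : r ≤ t) (htT : t + r ≤ T)
    (W : ℤ → ℝ) (hWb : ∀ i ∈ Finset.Icc (-(r : ℤ)) (r : ℤ), |W i| ≤ Wmax)
    (hWm : ∀ k : ℕ, k ≤ l →
      (2 * (r : ℝ) + 1)⁻¹ * ∑ i ∈ Finset.Icc (-(r : ℤ)) (r : ℤ), (i : ℝ) ^ k * W i
        = if k = 0 then 1 else 0) :
    |(2 * (r : ℝ) + 1)⁻¹ * ∑ i ∈ Finset.Icc (-(r : ℤ)) (r : ℤ),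
        W i * (f (((t : ℝ) + (i : ℝ)) / T) - f ((t : ℝ) / T))|
      ≤ L * Wmax / (Nat.factorial l) * ((r : ℝ) / T) ^ β := by
  have hTpos : (0 : ℝ) < T := by exact_mod_cast hT
  have h2r : (0 : ℝ) < 2 * r + 1 := by positivity
  have hβ0 : (0 : ℝ) < β := lt_of_le_of_lt (Nat.cast_nonneg l) hβ1
  set s : Finset ℤ := Finset.Icc (-(r : ℤ)) (r : ℤ) with hs
  set x : ℝ := (t : ℝ) / T with hxdef
  -- memberships
  have hxI : x ∈ Set.Icc (0 : ℝ) 1 := by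
    constructor
    · positivity
    · rw [div_le_one hTpos]
      exact_mod_cast le_trans (Nat.le_add_right t r) htT
  have hyI : ∀ i ∈ s, ((t : ℝ) + (i : ℝ)) / T ∈ Set.Icc (0 : ℝ) 1 := by
    intro i hi
    obtain ⟨h1, h2⟩ := Finset.mem_Icc.mp hi
    have hi1 : -(r : ℝ) ≤ (i : ℝ) := by exact_mod_cast h1
    have hi2 : (i : ℝ) ≤ (r : ℝ) := by exact_mod_cast h2
    have hr1 : (r : ℝ) ≤ (t : ℝ) := by exact_mod_cast hrt
    have hr2 : (t : ℝ) + (r : ℝ) ≤ (T : ℝ) := by exact_mod_cast htT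
    constructor
    · apply div_nonneg _ hTpos.le; linarith
    · rw [div_le_one hTpos]; linarith
  -- Taylor polynomial and remainder
  set P : ℤ → ℝ := fun i => ∑ k ∈ Finset.range (l + 1),
      ((k.factorial : ℝ))⁻¹ * ((i : ℝ) / T) ^ k * iteratedDeriv k f x with hP
  set R : ℤ → ℝ := fun i => f (((t : ℝ) + (i : ℝ)) / T) - P i with hR
  have hyx : ∀ i : ℤ, ((t : ℝ) + (i : ℝ)) / T - x = (i : ℝ) / T := by
    intro i; rw [hxdef, div_sub_div_same]; ring_nf
  -- remainder bound
  have hWmax0 : 0 ≤ Wmax := le_trans (abs_nonneg _)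
    (hWb 0 (Finset.mem_Icc.mpr ⟨by omega, by omega⟩))
  have hRb : ∀ i ∈ s, |R i| ≤ L * ((r : ℝ) / T) ^ β / (l.factorial : ℝ) := by
    intro i hi
    have h1 := taylor_holder l β L hβ1 hL f hf hHolder hxI (hyI i hi)
    rw [hyx i] at h1
    refine le_trans h1 ?_
    have habs : |(i : ℝ) / T| ≤ (r : ℝ) / T := by
      obtain ⟨ha, hb⟩ := Finset.mem_Icc.mp hi
      rw [abs_div, abs_of_pos hTpos]
      have h3 : |(i : ℝ)| ≤ (r : ℝ) := by
        rw [← Int.cast_abs]; exact_mod_cast abs_le.mpr ⟨ha, hb⟩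
      exact (div_le_div_iff_of_pos_right hTpos).mpr h3
    have hr : |(i : ℝ) / T| ^ β ≤ ((r : ℝ) / T) ^ β :=
      Real.rpow_le_rpow (abs_nonneg _) habs hβ0.le
    have hfac : (0 : ℝ) < (l.factorial : ℝ) := by exact_mod_cast l.factorial_pos
    exact (div_le_div_iff_of_pos_right hfac).mpr (mul_le_mul_of_nonneg_left hr hL.le)
  -- moment sums without the normalization
  have hSk : ∀ k : ℕ, k ≤ l → ∑ i ∈ s, (i : ℝ) ^ k * W i
      = (2 * (r : ℝ) + 1) * (if k = 0 then 1 else 0) := by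
    intro k hk
    have := hWm k hk
    rwa [inv_mul_eq_iff_eq_mul₀ h2r.ne'] at this
  have hW1 : ∑ i ∈ s, W i = 2 * (r : ℝ) + 1 := by
    have := hSk 0 (Nat.zero_le l)
    simpa using this
  -- key identity
  have hWP : ∑ i ∈ s, W i * P i = f x * (2 * (r : ℝ) + 1) := by
    have e1 : ∀ i ∈ s, W i * P i = ∑ k ∈ Finset.range (l + 1),
        (((k.factorial : ℝ))⁻¹ * iteratedDeriv k f x / (T : ℝ) ^ k) * ((i : ℝ) ^ k * W i) := by
      intro i _
      rw [hP, Finset.mul_sum]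
      refine Finset.sum_congr rfl fun k _ => ?_
      rw [div_pow]; ring
    rw [Finset.sum_congr rfl e1, Finset.sum_comm]
    have e2 : ∀ k ∈ Finset.range (l + 1),
        ∑ i ∈ s, (((k.factorial : ℝ))⁻¹ * iteratedDeriv k f x / (T : ℝ) ^ k) * ((i : ℝ) ^ k * W i)
          = (((k.factorial : ℝ))⁻¹ * iteratedDeriv k f x / (T : ℝ) ^ k)
              * ((2 * (r : ℝ) + 1) * (if k = 0 then 1 else 0)) := by
      intro k hk
      rw [← Finset.mul_sum, hSk k (Nat.lt_succ_iff.mp (Finset.mem_range.mp hk))]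
    rw [Finset.sum_congr rfl e2,
      Finset.sum_eq_single_of_mem 0 (Finset.mem_range.2 (Nat.succ_pos l))]
    · simp [iteratedDeriv_zero]
    · intro k _ hk
      simp [hk]
  have hid : ∑ i ∈ s, W i * (f (((t : ℝ) + (i : ℝ)) / T) - f x)
      = ∑ i ∈ s, W i * R i := by
    have e1 : ∀ i ∈ s, W i * (f (((t : ℝ) + (i : ℝ)) / T) - f x)
        = W i * R i + (W i * P i - W i * f x) := by
      intro i _
      rw [hR]; ring
    rw [Finset.sum_congr rfl e1, Finset.sum_add_distrib, Finset.sum_sub_distrib,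
      hWP, ← Finset.sum_mul, hW1]
    ring
  rw [hid]
  -- final bound
  have hb : |∑ i ∈ s, W i * R i| ≤ (2 * (r : ℝ) + 1) * (Wmax * (L * ((r : ℝ) / T) ^ β / (l.factorial : ℝ))) := by
    refine le_trans (Finset.abs_sum_le_sum_abs _ _) ?_
    have hcard : (s.card : ℝ) = 2 * (r : ℝ) + 1 := by
      rw [hs, Int.card_Icc]
      have : (((r : ℤ) + 1 - -(r : ℤ)).toNat) = 2 * r + 1 := by omega
      rw [this]; push_cast; ring
    calc ∑ i ∈ s, |W i * R i|
        ≤ ∑ i ∈ s, Wmax * (L * ((r : ℝ) / T) ^ β / (l.factorial : ℝ)) := by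
          refine Finset.sum_le_sum fun i hi => ?_
          rw [abs_mul]
          exact mul_le_mul (hWb i hi) (hRb i hi) (abs_nonneg _) hWmax0
      _ = (2 * (r : ℝ) + 1) * (Wmax * (L * ((r : ℝ) / T) ^ β / (l.factorial : ℝ))) := by
          rw [Finset.sum_const, nsmul_eq_mul, hcard]
  rw [abs_mul, abs_of_pos (inv_pos.2 h2r)]
  calc (2 * (r : ℝ) + 1)⁻¹ * |∑ i ∈ s, W i * R i|
      ≤ (2 * (r : ℝ) + 1)⁻¹ * ((2 * (r : ℝ) + 1) * (Wmax * (L * ((r : ℝ) / T) ^ β / (l.factorial : ℝ)))) := by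
        exact mul_le_mul_of_nonneg_left hb (inv_pos.2 h2r).le
    _ = L * Wmax / (Nat.factorial l) * ((r : ℝ) / T) ^ β := by
        field_simp
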